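/- Let (X,d,μ) be a metric measure space where μ is a doubling Borel measure with constant D (μ(2B) ≤ D·μ(B) < ∞ for all balls B), let D be a dyadic system with parameter δ ∈ (0,1), and let Q ∈ D be a cube with Haar function h_Q = Σ_k v_k·1_{Q_k}, where Q_k are the children of Q. Then there exist constants 0 < c ≤ C < ∞ depending only on D and δ such that: (a) c·μ(Q)^(−1/2) ≤ ‖h_Q‖_∞ = max_k |v_k| ≤ C·μ(Q)^(−1/2); (b) c·μ(Q)^(1/2) ≤ ‖h_Q‖_{L¹(μ)} ≤ C·μ(Q)^(1/2); (c) |h_Q(x)| ≤ C·μ(Q)^(−1/2)·1_Q(x) for every x ∈ X, and there exists a child Q_j of Q such that |h_Q(x)| ≥ c·μ(Q_j)^(−1/2) for every x ∈ Q_j. -/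

import Mathlib

open Metric MeasureTheory

/-- A dyadic system with parameter `δ ∈ (0,1)`: a countable collection of cubes `cube k z`
with centre points `idx k` forming maximal `δ^k`-separated sets, satisfying the standard
properties of dyadic cubes. -/
structure DyadicSystem (X : Type*) [MetricSpace X] (δ : ℝ) where
  idx : ℤ → Set X
  cube : ℤ → X → Set X
  countable : ∀ k, (idx k).Countable
  separated : ∀ k : ℤ, ∀ z ∈ idx k, ∀ w ∈ idx k, z ≠ w → δ ^ k ≤ dist z w
  maximal : ∀ (k : ℤ) (x : X), ∃ z ∈ idx k, dist x z < δ ^ k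
  covers : ∀ k : ℤ, (⋃ z ∈ idx k, cube k z) = Set.univ
  tree : ∀ (k l : ℤ) (z w : X), z ∈ idx k → w ∈ idx l →
    cube k z ∩ cube l w = ∅ ∨ cube k z ⊆ cube l w ∨ cube l w ⊆ cube k z
  ball_subset : ∀ k : ℤ, ∀ z ∈ idx k, ball z (δ ^ k / 5) ⊆ cube k z
  subset_ball : ∀ k : ℤ, ∀ z ∈ idx k, cube k z ⊆ ball z (3 * δ ^ k)
  union_descendants : ∀ (k : ℤ) (m : ℕ), ∀ z ∈ idx k,
    cube k z = ⋃ w ∈ {w ∈ idx (k + (m : ℤ)) | cube (k + (m : ℤ)) w ⊆ cube k z},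
      cube (k + (m : ℤ)) w

/-- A Borel measure `μ` is doubling with constant `Dc` if `μ(2B) ≤ Dc·μ(B) < ∞`
for every open ball `B`. -/
def DoublingMeasure {X : Type*} [MetricSpace X] [MeasurableSpace X] (μ : Measure X)
    (Dc : ℝ) : Prop :=
  ∀ (x : X) (r : ℝ), 0 < r →
    μ (ball x (2 * r)) ≤ ENNReal.ofReal Dc * μ (ball x r) ∧ μ (ball x (2 * r)) < ⊤

/-- A Haar function associated to the cube of level `k` centred at `z` in a dyadic system `D`:
a measurable function supported on the cube, constant on each child of the cube, with zero mean
and `L²(μ)`-norm one. -/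
def IsHaar {X : Type*} [MetricSpace X] [MeasurableSpace X] {δ : ℝ} (μ : Measure X)
    (D : DyadicSystem X δ) (k : ℤ) (z : X) (h : X → ℝ) : Prop :=
  Measurable h ∧
  Function.support h ⊆ D.cube k z ∧
  (∀ w ∈ D.idx (k + 1), D.cube (k + 1) w ⊆ D.cube k z →
    ∀ x ∈ D.cube (k + 1) w, ∀ y ∈ D.cube (k + 1) w, h x = h y) ∧
  (∫ x, h x ∂μ) = 0 ∧
  (∫ x, (h x) ^ 2 ∂μ) = 1

lemma doubling_iter' {X : Type} [MetricSpace X] [MeasurableSpace X] {μ : Measure X} {Dc : ℝ}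
    (hd : DoublingMeasure μ Dc) (x : X) (r : ℝ) (hr : 0 < r) (m : ℕ) :
    μ (ball x (2 ^ m * r)) ≤ ENNReal.ofReal ((max Dc 1) ^ m) * μ (ball x r) := by
  induction m with
  | zero => simp
  | succ m ih =>
    have h2 : (2:ℝ) ^ (m+1) * r = 2 * (2 ^ m * r) := by ring
    rw [h2]
    calc μ (ball x (2 * (2 ^ m * r))) ≤ ENNReal.ofReal Dc * μ (ball x (2 ^ m * r)) :=
          (hd x _ (by positivity)).1
      _ ≤ ENNReal.ofReal (max Dc 1) * (ENNReal.ofReal ((max Dc 1) ^ m) * μ (ball x r)) :=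
          mul_le_mul' (ENNReal.ofReal_le_ofReal (le_max_left _ _)) ih
      _ = ENNReal.ofReal ((max Dc 1) ^ (m+1)) * μ (ball x r) := by
          rw [← mul_assoc, ← ENNReal.ofReal_mul (le_trans zero_le_one (le_max_right _ _)),
            ← pow_succ']

lemma ball_finite' {X : Type} [MetricSpace X] [MeasurableSpace X] {μ : Measure X} {Dc : ℝ}
    (hd : DoublingMeasure μ Dc) (x : X) (r : ℝ) (hr : 0 < r) : μ (ball x r) < ⊤ := by
  have := (hd x (r/2) (by positivity)).2
  rwa [show 2 * (r/2) = r by ring] at this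

lemma rpow_neg_half' (t : ℝ) (ht : 0 ≤ t) : t ^ (-(2:ℝ)⁻¹) = (Real.sqrt t)⁻¹ := by
  rw [Real.rpow_neg ht, Real.sqrt_eq_rpow]; norm_num

lemma rpow_half' (t : ℝ) : t ^ ((2:ℝ)⁻¹) = Real.sqrt t := by
  rw [Real.sqrt_eq_rpow]; norm_num

/-- Size estimates for Haar functions: there are constants `0 < c ≤ C < ∞`, depending only on
the doubling constant `Dc` and `δ`, such that every Haar function `h` of a cube `Q` satisfies
(a) `c·μ(Q)^(−1/2) ≤ ‖h‖_∞ ≤ C·μ(Q)^(−1/2)`; (b) `c·μ(Q)^(1/2) ≤ ‖h‖_{L¹(μ)} ≤ C·μ(Q)^(1/2)`;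
(c) `|h(x)| ≤ C·μ(Q)^(−1/2)·1_Q(x)` for all `x`, and on some child `Q_j` of `Q` one has
`|h(x)| ≥ c·μ(Q_j)^(−1/2)`. -/
theorem stmt11 (Dc δ : ℝ) (hδ : δ ∈ Set.Ioo (0 : ℝ) 1) :
    ∃ c C : ℝ, 0 < c ∧ c ≤ C ∧
    ∀ (X : Type) [MetricSpace X] [MeasurableSpace X] [BorelSpace X] (μ : Measure X),
      DoublingMeasure μ Dc →
      ∀ D : DyadicSystem X δ, (∀ (k : ℤ) (z : X), z ∈ D.idx k → MeasurableSet (D.cube k z)) →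
      ∀ (k : ℤ) (z : X), z ∈ D.idx k →
      ∀ h : X → ℝ, IsHaar μ D k z h →
        (ENNReal.ofReal c * μ (D.cube k z) ^ (-(2 : ℝ)⁻¹) ≤ eLpNorm h ⊤ μ ∧
          eLpNorm h ⊤ μ ≤ ENNReal.ofReal C * μ (D.cube k z) ^ (-(2 : ℝ)⁻¹)) ∧
        (ENNReal.ofReal c * μ (D.cube k z) ^ ((2 : ℝ)⁻¹) ≤ eLpNorm h 1 μ ∧
          eLpNorm h 1 μ ≤ ENNReal.ofReal C * μ (D.cube k z) ^ ((2 : ℝ)⁻¹)) ∧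
        (∀ x : X, |h x| ≤
          C * (μ (D.cube k z)).toReal ^ (-(2 : ℝ)⁻¹) *
            Set.indicator (D.cube k z) (fun _ => (1 : ℝ)) x) ∧
        (∃ w ∈ D.idx (k + 1), D.cube (k + 1) w ⊆ D.cube k z ∧
          ∀ x ∈ D.cube (k + 1) w,
            c * (μ (D.cube (k + 1) w)).toReal ^ (-(2 : ℝ)⁻¹) ≤ |h x|) := by
  obtain ⟨hδ0, hδ1⟩ := hδ
  obtain ⟨n, hn⟩ := pow_unbounded_of_one_lt (30/δ) (one_lt_two (α := ℝ))
  set K : ℝ := max Dc 1 with hK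
  have hK1 : (1:ℝ) ≤ K := le_max_right _ _
  set A : ℝ := K ^ n with hA
  have hA1 : (1:ℝ) ≤ A := one_le_pow₀ hK1
  have hA0 : (0:ℝ) < A := lt_of_lt_of_le one_pos hA1
  set C : ℝ := Real.sqrt A with hC
  set c : ℝ := (Real.sqrt (2 * A))⁻¹ with hc
  have hsA : (0:ℝ) < Real.sqrt A := Real.sqrt_pos.2 hA0
  have hs2A : (0:ℝ) < Real.sqrt (2*A) := Real.sqrt_pos.2 (by linarith)
  have hc0 : 0 < c := inv_pos.2 hs2A
  have hC0 : 0 < C := hsA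
  have hsAle : Real.sqrt A ≤ Real.sqrt (2*A) := Real.sqrt_le_sqrt (by linarith)
  have hc1 : c ≤ 1 := by
    rw [hc]
    exact inv_le_one_of_one_le₀ (Real.one_le_sqrt.2 (by linarith))
  have hC1 : (1:ℝ) ≤ C := Real.one_le_sqrt.2 hA1
  have hcC : c ≤ C := le_trans hc1 hC1
  have hcCinv : c ≤ C⁻¹ := by
    rw [hc, hC]
    exact inv_anti₀ hsA hsAle
  refine ⟨c, C, hc0, hcC, ?_⟩
  intro X _ _ _ μ hd D hmeas k z hz h hH
  obtain ⟨hmh, hsupp, hconst, hint0, hint2⟩ := hH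
  set Q : Set X := D.cube k z with hQdef
  have hQmeas : MeasurableSet Q := hmeas k z hz
  -- basic facts about μ Q
  have hμQ0 : μ Q ≠ 0 := by
    intro h0
    have hz0 : ∀ᵐ x ∂μ, h x = 0 := by
      rw [Filter.eventually_iff, mem_ae_iff]
      refine measure_mono_null ?_ h0
      intro x hx
      exact hsupp (Function.mem_support.2 (by simpa using hx))
    have hzero : (∫ x, (h x) ^ 2 ∂μ) = 0 := by
      have heq : (fun x => h x ^ 2) =ᵐ[μ] (fun _ => (0:ℝ)) := by
        filter_upwards [hz0] with x hx; simp [hx]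
      rw [integral_congr_ae heq, integral_zero]
    rw [hint2] at hzero; norm_num at hzero
  have hδk : (0:ℝ) < δ ^ k := zpow_pos hδ0 _
  have hδk1 : (0:ℝ) < δ ^ (k+1) := zpow_pos hδ0 _
  have hμQtop : μ Q ≠ ⊤ := by
    refine ne_top_of_le_ne_top (ne_of_lt (ball_finite' hd z (3 * δ ^ k) (by positivity))) ?_
    exact measure_mono (D.subset_ball k z hz)
  set mQ : ℝ := (μ Q).toReal with hmQ
  have hmQ0 : 0 < mQ := ENNReal.toReal_pos hμQ0 hμQtop
  have key_rpow : ∀ r : ℝ, μ Q ^ r = ENNReal.ofReal (mQ ^ r) := by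
    intro r
    rw [hmQ, ENNReal.toReal_rpow, ENNReal.ofReal_toReal]
    intro htop
    rcases ENNReal.rpow_eq_top_iff.1 htop with ⟨h1, _⟩ | ⟨h1, _⟩
    · exact hμQ0 h1
    · exact hμQtop h1
  -- integrability of h^2 and lintegral form
  have hInt2 : Integrable (fun x => h x ^ 2) μ := by
    by_contra hcon
    rw [integral_undef hcon] at hint2; norm_num at hint2
  have key1 : (∫⁻ x, ENNReal.ofReal (h x ^ 2) ∂μ) = 1 := by
    rw [← ofReal_integral_eq_lintegral_ofReal hInt2
      (Filter.Eventually.of_forall fun x => sq_nonneg _), hint2, ENNReal.ofReal_one]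
  -- vanishing outside Q
  have hvan : ∀ x : X, x ∉ Q → h x = 0 := by
    intro x hx
    by_contra hne; exact hx (hsupp (Function.mem_support.2 hne))
  -- children cover Q
  have hmemchild : ∀ x ∈ Q, ∃ w ∈ D.idx (k+1), D.cube (k+1) w ⊆ Q ∧ x ∈ D.cube (k+1) w := by
    intro x hx
    have hcov := D.union_descendants k 1 z hz
    simp only [Nat.cast_one] at hcov
    rw [hQdef, hcov] at hx
    simp only [Set.mem_iUnion, Set.mem_setOf_eq] at hx
    obtain ⟨w, ⟨hw1, hw2⟩, hxw⟩ := hx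
    exact ⟨w, hw1, hw2, hxw⟩
  -- doubling comparison for children
  have hchild : ∀ w ∈ D.idx (k+1), D.cube (k+1) w ⊆ Q →
      μ Q ≤ ENNReal.ofReal A * μ (D.cube (k+1) w) := by
    intro w hw hsub
    have hwmem : w ∈ D.cube (k+1) w :=
      D.ball_subset (k+1) w hw (mem_ball_self (by positivity))
    have hwz : dist w z < 3 * δ ^ k := by
      have := D.subset_ball k z hz (hsub hwmem)
      simpa [mem_ball] using this
    have hQball : Q ⊆ ball w ((2:ℝ) ^ n * (δ ^ (k+1) / 5)) := by
      intro x hx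
      have hx1 : dist x z < 3 * δ ^ k := by
        simpa [mem_ball] using D.subset_ball k z hz hx
      have hxw : dist x w < 6 * δ ^ k := by
        calc dist x w ≤ dist x z + dist z w := dist_triangle x z w
          _ < 3 * δ ^ k + 3 * δ ^ k := by rw [dist_comm z w]; linarith
          _ = 6 * δ ^ k := by ring
      refine mem_ball.2 (lt_of_lt_of_le hxw ?_)
      have h30 : (30:ℝ) ≤ 2 ^ n * δ := by
        rw [div_lt_iff₀ hδ0] at hn
        linarith
      have hzp : δ ^ (k+1) = δ * δ ^ k := by
        rw [zpow_add_one₀ (ne_of_gt hδ0)]; ring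
      rw [hzp, show (2:ℝ) ^ n * (δ * δ ^ k / 5) = (2 ^ n * δ) * δ ^ k / 5 by ring,
        show (6:ℝ) * δ ^ k = 30 * δ ^ k / 5 by ring]
      gcongr
    calc μ Q ≤ μ (ball w ((2:ℝ) ^ n * (δ ^ (k+1) / 5))) := measure_mono hQball
      _ ≤ ENNReal.ofReal A * μ (ball w (δ ^ (k+1) / 5)) :=
          doubling_iter' hd w _ (by positivity) n
      _ ≤ ENNReal.ofReal A * μ (D.cube (k+1) w) :=
          mul_le_mul_right (measure_mono (D.ball_subset (k+1) w hw)) _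
  -- per-child value bound
  have hvb : ∀ w ∈ D.idx (k+1), D.cube (k+1) w ⊆ Q →
      ∀ x ∈ D.cube (k+1) w, h x ^ 2 * (μ (D.cube (k+1) w)).toReal ≤ 1 := by
    intro w hw hsub x hx
    have hWmeas := hmeas (k+1) w hw
    have e1 : ∫ y in D.cube (k+1) w, h y ^ 2 ∂μ = (μ (D.cube (k+1) w)).toReal * (h x ^ 2) := by
      rw [setIntegral_congr_fun hWmeas (g := fun _ => h x ^ 2)
        (fun y hy => by rw [hconst w hw hsub y hy x hx])]
      rw [setIntegral_const, Measure.real_def]; simp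
    have e2 : ∫ y in D.cube (k+1) w, h y ^ 2 ∂μ ≤ 1 := by
      rw [← hint2]
      exact setIntegral_le_integral hInt2 (Filter.Eventually.of_forall fun y => sq_nonneg _)
    rw [e1] at e2; linarith
  -- child measure facts
  have hchildR : ∀ w ∈ D.idx (k+1), D.cube (k+1) w ⊆ Q →
      mQ ≤ A * (μ (D.cube (k+1) w)).toReal ∧ 0 < (μ (D.cube (k+1) w)).toReal := by
    intro w hw hsub
    have hWtop : μ (D.cube (k+1) w) ≠ ⊤ :=
      ne_top_of_le_ne_top hμQtop (measure_mono hsub)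
    have h1 : mQ ≤ A * (μ (D.cube (k+1) w)).toReal := by
      have h2 := hchild w hw hsub
      have h3 : (μ Q).toReal ≤ (ENNReal.ofReal A * μ (D.cube (k+1) w)).toReal :=
        ENNReal.toReal_mono (ENNReal.mul_ne_top ENNReal.ofReal_ne_top hWtop) h2
      rwa [ENNReal.toReal_mul, ENNReal.toReal_ofReal hA0.le] at h3
    refine ⟨h1, ?_⟩
    by_contra hc'
    push_neg at hc'
    nlinarith
  -- pointwise square bound on Q
  have hsq : ∀ x ∈ Q, h x ^ 2 ≤ A / mQ := by
    intro x hx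
    obtain ⟨w, hw, hsub, hxw⟩ := hmemchild x hx
    have h1 := hvb w hw hsub x hxw
    obtain ⟨h2, h3⟩ := hchildR w hw hsub
    have hq : h x ^ 2 ≤ 1 / (μ (D.cube (k+1) w)).toReal := by
      rw [le_div_iff₀ h3]; linarith
    have h4 : 1 / (μ (D.cube (k+1) w)).toReal ≤ A / mQ := by
      rw [div_le_div_iff₀ h3 hmQ0]; nlinarith
    linarith
  -- pointwise bound (part c, first half)
  have hpt : ∀ x : X, |h x| ≤ C * mQ ^ (-(2:ℝ)⁻¹) * Set.indicator Q (fun _ => (1:ℝ)) x := by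
    intro x
    by_cases hx : x ∈ Q
    · rw [Set.indicator_of_mem hx, mul_one]
      calc |h x| = Real.sqrt (h x ^ 2) := (Real.sqrt_sq_eq_abs _).symm
        _ ≤ Real.sqrt (A / mQ) := Real.sqrt_le_sqrt (hsq x hx)
        _ = C * mQ ^ (-(2:ℝ)⁻¹) := by
            rw [Real.sqrt_div hA0.le, rpow_neg_half' mQ hmQ0.le, hC, div_eq_mul_inv]
    · rw [Set.indicator_of_notMem hx, mul_zero]
      simp [hvan x hx]
  set B : ℝ := C * mQ ^ (-(2:ℝ)⁻¹) with hB
  have hBpos : 0 < B := mul_pos hC0 (Real.rpow_pos_of_pos hmQ0 _)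
  have hptB : ∀ x : X, |h x| ≤ B := by
    intro x
    refine le_trans (hpt x) ?_
    by_cases hx : x ∈ Q
    · rw [Set.indicator_of_mem hx, mul_one]
    · rw [Set.indicator_of_notMem hx, mul_zero]; exact hBpos.le
  have hofB : ENNReal.ofReal C * μ Q ^ (-(2:ℝ)⁻¹) = ENNReal.ofReal B := by
    rw [key_rpow, ← ENNReal.ofReal_mul hC0.le]
  -- (a) upper
  have haUpper : eLpNorm h ⊤ μ ≤ ENNReal.ofReal C * μ Q ^ (-(2:ℝ)⁻¹) := by
    rw [eLpNorm_exponent_top, hofB]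
    exact eLpNormEssSup_le_of_ae_bound (Filter.Eventually.of_forall fun x => by
      rw [Real.norm_eq_abs]; exact hptB x)
  -- (a) lower
  have haLowerAux : (1:ENNReal) ≤ (eLpNormEssSup h μ) ^ (2:ℕ) * μ Q := by
    have hae : ∀ᵐ x ∂μ, ENNReal.ofReal (h x ^ 2) ≤
        Set.indicator Q (fun _ => (eLpNormEssSup h μ) ^ (2:ℕ)) x := by
      filter_upwards [ae_le_eLpNormEssSup (f := h) (μ := μ)] with x hx
      by_cases hxQ : x ∈ Q
      · rw [Set.indicator_of_mem hxQ]
        have e : ENNReal.ofReal (h x ^ 2) = ((‖h x‖₊ : ENNReal)) ^ (2:ℕ) := by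
          rw [show h x ^ 2 = |h x| * |h x| by rw [← sq_abs]; ring,
            ENNReal.ofReal_mul (abs_nonneg _), ← Real.enorm_eq_ofReal_abs, enorm_eq_nnnorm, sq]
        rw [e, sq, sq]
        exact mul_le_mul' hx hx
      · rw [Set.indicator_of_notMem hxQ]
        simp [hvan x hxQ]
    calc (1:ENNReal) = ∫⁻ x, ENNReal.ofReal (h x ^ 2) ∂μ := key1.symm
      _ ≤ ∫⁻ x, Set.indicator Q (fun _ => (eLpNormEssSup h μ) ^ (2:ℕ)) x ∂μ :=
          lintegral_mono_ae hae
      _ = (eLpNormEssSup h μ) ^ (2:ℕ) * μ Q := by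
          rw [lintegral_indicator hQmeas, setLIntegral_const]
  have haLower : ENNReal.ofReal c * μ Q ^ (-(2:ℝ)⁻¹) ≤ eLpNorm h ⊤ μ := by
    rw [eLpNorm_exponent_top]
    have h2 : (μ Q)⁻¹ ≤ (eLpNormEssSup h μ) ^ (2:ℕ) := by
      have hm := mul_le_mul_left haLowerAux (μ Q)⁻¹
      rwa [one_mul, mul_assoc, ENNReal.mul_inv_cancel hμQ0 hμQtop, mul_one] at hm
    have h1 : μ Q ^ (-(2:ℝ)⁻¹) ≤ eLpNormEssSup h μ := by
      calc μ Q ^ (-(2:ℝ)⁻¹) = ((μ Q)⁻¹) ^ ((2:ℝ)⁻¹) := by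
            rw [ENNReal.inv_rpow, ENNReal.rpow_neg]
        _ ≤ ((eLpNormEssSup h μ) ^ (2:ℕ)) ^ ((2:ℝ)⁻¹) :=
            ENNReal.rpow_le_rpow h2 (by norm_num)
        _ = eLpNormEssSup h μ := by
            rw [← ENNReal.rpow_natCast (eLpNormEssSup h μ) 2, ← ENNReal.rpow_mul]
            norm_num
    calc ENNReal.ofReal c * μ Q ^ (-(2:ℝ)⁻¹) ≤ 1 * eLpNormEssSup h μ :=
        mul_le_mul' (ENNReal.ofReal_le_one.2 hc1) h1
      _ = eLpNormEssSup h μ := one_mul _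
  -- (b)
  have hL1 : eLpNorm h 1 μ = ∫⁻ x, (‖h x‖₊ : ENNReal) ∂μ := eLpNorm_one_eq_lintegral_enorm
  have hbUpper : eLpNorm h 1 μ ≤ ENNReal.ofReal C * μ Q ^ ((2:ℝ)⁻¹) := by
    have step : eLpNorm h 1 μ ≤ ENNReal.ofReal B * μ Q := by
      rw [hL1]
      calc ∫⁻ x, (‖h x‖₊ : ENNReal) ∂μ
          ≤ ∫⁻ x, Set.indicator Q (fun _ => ENNReal.ofReal B) x ∂μ := by
            refine lintegral_mono fun x => ?_
            by_cases hx : x ∈ Q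
            · rw [Set.indicator_of_mem hx, ← enorm_eq_nnnorm, Real.enorm_eq_ofReal_abs]
              exact ENNReal.ofReal_le_ofReal (hptB x)
            · rw [Set.indicator_of_notMem hx]
              simp [hvan x hx]
        _ = ENNReal.ofReal B * μ Q := by rw [lintegral_indicator hQmeas, setLIntegral_const]
    refine le_trans step (le_of_eq ?_)
    rw [← hofB, mul_assoc]
    congr 1
    have e : μ Q ^ (-(2:ℝ)⁻¹) * μ Q ^ (1:ℝ) = μ Q ^ ((2:ℝ)⁻¹) := by
      rw [← ENNReal.rpow_add _ _ hμQ0 hμQtop]; norm_num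
    simpa [ENNReal.rpow_one] using e
  have hbLower : ENNReal.ofReal c * μ Q ^ ((2:ℝ)⁻¹) ≤ eLpNorm h 1 μ := by
    have h1 : (1:ENNReal) ≤ ENNReal.ofReal B * eLpNorm h 1 μ := by
      rw [hL1, ← lintegral_const_mul' _ _ ENNReal.ofReal_ne_top, ← key1]
      refine lintegral_mono fun x => ?_
      rw [show h x ^ 2 = |h x| * |h x| by rw [← sq_abs]; ring,
        ENNReal.ofReal_mul (abs_nonneg _), ← enorm_eq_nnnorm, Real.enorm_eq_ofReal_abs]
      exact mul_le_mul_left (ENNReal.ofReal_le_ofReal (hptB x)) _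
    have hB0' : ENNReal.ofReal B ≠ 0 := ne_of_gt (ENNReal.ofReal_pos.2 hBpos)
    have h2 : (ENNReal.ofReal B)⁻¹ ≤ eLpNorm h 1 μ := by
      calc (ENNReal.ofReal B)⁻¹ = (ENNReal.ofReal B)⁻¹ * 1 := (mul_one _).symm
        _ ≤ (ENNReal.ofReal B)⁻¹ * (ENNReal.ofReal B * eLpNorm h 1 μ) := mul_le_mul_right h1 _
        _ = eLpNorm h 1 μ := by
            rw [← mul_assoc, ENNReal.inv_mul_cancel hB0' ENNReal.ofReal_ne_top, one_mul]
    refine le_trans ?_ h2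
    rw [← ENNReal.ofReal_inv_of_pos hBpos, key_rpow, ← ENNReal.ofReal_mul hc0.le]
    refine ENNReal.ofReal_le_ofReal ?_
    rw [hB, rpow_neg_half' mQ hmQ0.le, rpow_half', mul_inv, inv_inv]
    exact mul_le_mul_of_nonneg_right hcCinv (Real.sqrt_nonneg _)
  -- (c) second half: the big child
  have hex : ∃ w ∈ D.idx (k+1), D.cube (k+1) w ⊆ Q ∧
      ∃ x ∈ D.cube (k+1) w, (2 * mQ)⁻¹ ≤ h x ^ 2 := by
    by_contra hcon
    push_neg at hcon
    have hbd : ∀ x : X, ENNReal.ofReal (h x ^ 2) ≤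
        Set.indicator Q (fun _ => (2 * μ Q)⁻¹) x := by
      intro x
      by_cases hx : x ∈ Q
      · rw [Set.indicator_of_mem hx]
        obtain ⟨w, hw, hsub, hxw⟩ := hmemchild x hx
        have hlt := le_of_lt (hcon w hw hsub x hxw)
        calc ENNReal.ofReal (h x ^ 2) ≤ ENNReal.ofReal ((2*mQ)⁻¹) :=
            ENNReal.ofReal_le_ofReal hlt
          _ = (2 * μ Q)⁻¹ := by
              rw [ENNReal.ofReal_inv_of_pos (by positivity),
                ENNReal.ofReal_mul (by norm_num : (0:ℝ) ≤ 2), ENNReal.ofReal_ofNat,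
                hmQ, ENNReal.ofReal_toReal hμQtop]
      · rw [Set.indicator_of_notMem hx]
        simp [hvan x hx]
    have hcontra : (1:ENNReal) ≤ (2 * μ Q)⁻¹ * μ Q := by
      calc (1:ENNReal) = ∫⁻ x, ENNReal.ofReal (h x ^ 2) ∂μ := key1.symm
        _ ≤ ∫⁻ x, Set.indicator Q (fun _ => (2 * μ Q)⁻¹) x ∂μ := lintegral_mono hbd
        _ = (2 * μ Q)⁻¹ * μ Q := by rw [lintegral_indicator hQmeas, setLIntegral_const]
    rw [ENNReal.mul_inv (Or.inr hμQtop) (Or.inr hμQ0), mul_assoc,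
      ENNReal.inv_mul_cancel hμQ0 hμQtop, mul_one] at hcontra
    rw [ENNReal.le_inv_iff_mul_le] at hcontra
    simp at hcontra
  obtain ⟨w, hw, hsub, x0, hx0, hge⟩ := hex
  obtain ⟨hcmp, hmW0⟩ := hchildR w hw hsub
  refine ⟨⟨haLower, haUpper⟩, ⟨hbLower, hbUpper⟩, hpt, w, hw, hsub, ?_⟩
  intro x hx
  have hval : h x = h x0 := hconst w hw hsub x hx x0 hx0
  rw [rpow_neg_half' _ (le_of_lt hmW0), hc, ← mul_inv,
    ← Real.sqrt_mul (by linarith : (0:ℝ) ≤ 2*A)]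
  calc (Real.sqrt (2 * A * (μ (D.cube (k+1) w)).toReal))⁻¹
      ≤ (Real.sqrt (2 * mQ))⁻¹ := by
        refine inv_anti₀ (Real.sqrt_pos.2 (by positivity)) (Real.sqrt_le_sqrt ?_)
        nlinarith
    _ = Real.sqrt ((2 * mQ)⁻¹) := (Real.sqrt_inv _).symm
    _ ≤ Real.sqrt (h x0 ^ 2) := Real.sqrt_le_sqrt hge
    _ = |h x0| := Real.sqrt_sq_eq_abs _
    _ = |h x| := by rw [hval]
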